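/- Let f : ℝ → ℝ be a C² function on ℝ, I = [a,b] a closed interval, R ≥ max(|a|,|b|), and m, D > 0 constants with m ≤ f(x) for all x ∈ I, and |f'(x)| ≤ D and |f''(x)| ≤ D for all |x| ≤ R. Then for every natural number N with N > max{D/m + m/(16D), (1+R²)D/(Rm) + 1, 4D²/m² + 2, (1+R²)D/(2m)}, the function φ_N(x) = (1+x²)^N · f(x) satisfies φ_N''(x) > 0 for all x ∈ I; in particular φ_N is strictly convex on I. -/

import Mathlib

set_option maxHeartbeats 1000000 in
lemma key_ineq (m D R u n : ℝ) (hm : 0 < m) (hD : 0 < D) (hu0 : 0 ≤ u) (huR : u ≤ R)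
    (h2 : 0 < R → (1 + R^2) * D < (n - 1) * (R * m))
    (h3 : 4 * D^2 < (n - 2) * m^2)
    (h4 : (1 + R^2) * D < 2 * n * m) :
    0 < 2*n*(1+u^2)*m + 4*n*(n-1)*u^2*m - 4*n*u*(1+u^2)*D - (1+u^2)^2*D := by
  have hn2 : 2 < n := by nlinarith [sq_nonneg m, sq_nonneg D]
  have hu2R : u^2 ≤ R^2 := by nlinarith
  rcases eq_or_lt_of_le hu0 with h0 | hupos
  · rw [← h0]; nlinarith [sq_nonneg R]
  have hR : 0 < R := lt_of_lt_of_le hupos huR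
  have h2' := h2 hR
  have hnm : (0:ℝ) < (n-1)*m := by nlinarith
  by_cases hbig : (1 + u^2) * D ≤ (n - 1) * (u * m)
  · nlinarith [mul_nonneg (mul_nonneg (by linarith : (0:ℝ) ≤ 4*n) hu0)
        (by linarith : (0:ℝ) ≤ (n-1)*(u*m) - (1+u^2)*D),
      mul_pos (by positivity : (0:ℝ) < 1 + u^2) (by nlinarith : (0:ℝ) < 2*n*m - (1+u^2)*D)]
  · push_neg at hbig
    have huR1 : u * R < 1 := by
      by_contra hc
      push_neg at hc
      have : R * (1 + u^2) ≤ u * (1 + R^2) := by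
        nlinarith [mul_nonneg (sub_nonneg.2 huR) (by linarith : (0:ℝ) ≤ u*R - 1)]
      nlinarith [mul_pos hupos hm]
    have hu1 : u ≤ 1 := by nlinarith
    have key1 : 2*D < (n-1)*m := by nlinarith [sq_nonneg (2*D - m)]
    have key2 : 0 < n*(n-1)*m^2 - (n-1)*D*m - n*D^2 := by
      nlinarith [sq_nonneg ((n-1)*m - 2*D), mul_pos hm hD,
        mul_pos (show (0:ℝ) < n - 2 by linarith) (mul_pos hm hm)]
    have hG : 0 < (n-1)*m*(2*n*(1+u^2)*m + 4*n*(n-1)*u^2*m - 4*n*u*(1+u^2)*D - (1+u^2)^2*D) := by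
      have H1 : 0 ≤ 2*n*((n-1)*m*u - D)^2 := mul_nonneg (by linarith) (sq_nonneg _)
      have H2 : 0 ≤ 2*n*u^2*((n-1)*m)*((n-1)*m - 2*u*D) := by
        have h2ud : 2*u*D ≤ 2*D := by nlinarith
        exact mul_nonneg (mul_nonneg (mul_nonneg (by linarith) (sq_nonneg u)) hnm.le)
          (by linarith)
      have H3 : 0 ≤ (1 - u^2)*((1+u^2)*D*((n-1)*m)) := by
        have h1u : (0:ℝ) ≤ 1 - u^2 := by nlinarith
        exact mul_nonneg h1u (mul_nonneg (by positivity) hnm.le)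
      have H4 : 0 ≤ u^2*(n*(n-1)*m^2 - (n-1)*D*m) := by
        have : (0:ℝ) ≤ n*(n-1)*m^2 - (n-1)*D*m := by nlinarith [mul_pos hm hD]
        exact mul_nonneg (sq_nonneg u) this
      linarith [H1, H2, H3, H4, key2]
    by_contra hc
    push_neg at hc
    nlinarith [mul_nonneg hnm.le (neg_nonneg.2 hc)]

set_option maxHeartbeats 1000000 in
theorem stmt_0 (f : ℝ → ℝ) (hf : ContDiff ℝ 2 f) (a b R m D : ℝ)
    (hab : a ≤ b) (hR : max |a| |b| ≤ R) (hm : 0 < m) (hD : 0 < D)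
    (hfm : ∀ x ∈ Set.Icc a b, m ≤ f x)
    (hf1 : ∀ x : ℝ, |x| ≤ R → |deriv f x| ≤ D)
    (hf2 : ∀ x : ℝ, |x| ≤ R → |iteratedDeriv 2 f x| ≤ D)
    (N : ℕ)
    (hN : max (max (D / m + m / (16 * D)) ((1 + R ^ 2) * D / (R * m) + 1))
        (max (4 * D ^ 2 / m ^ 2 + 2) ((1 + R ^ 2) * D / (2 * m))) < (N : ℝ)) :
    (∀ x ∈ Set.Icc a b, 0 < iteratedDeriv 2 (fun x => (1 + x ^ 2) ^ N * f x) x) ∧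
      StrictConvexOn ℝ (Set.Icc a b) (fun x => (1 + x ^ 2) ^ N * f x) := by
  set n : ℝ := (N : ℝ) with hn
  -- extract the numeric bounds
  have hb2 : (1 + R ^ 2) * D / (R * m) + 1 < n := lt_of_le_of_lt (le_max_right _ _) (lt_of_le_of_lt (le_max_left _ _) hN)
  have hb3 : 4 * D ^ 2 / m ^ 2 + 2 < n := lt_of_le_of_lt (le_max_left _ _) (lt_of_le_of_lt (le_max_right _ _) hN)
  have hb4 : (1 + R ^ 2) * D / (2 * m) < n := lt_of_le_of_lt (le_max_right _ _) (lt_of_le_of_lt (le_max_right _ _) hN)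
  have h3 : 4 * D^2 < (n - 2) * m^2 := by
    have h := (div_lt_iff₀ (by positivity : (0:ℝ) < m ^ 2)).mp (by linarith : 4 * D ^ 2 / m ^ 2 < n - 2)
    linarith
  have h4 : (1 + R^2) * D < 2 * n * m := by
    have h := (div_lt_iff₀ (by positivity : (0:ℝ) < 2 * m)).mp hb4
    linarith
  have h2 : 0 < R → (1 + R^2) * D < (n - 1) * (R * m) := by
    intro hRpos
    have h := (div_lt_iff₀ (by positivity : (0:ℝ) < R * m)).mp (by linarith : (1 + R ^ 2) * D / (R * m) < n - 1)
    linarith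
  have hn2 : (2:ℝ) < n := by nlinarith [sq_nonneg m, sq_nonneg D, sq_nonneg R]
  have hN2 : 2 < N := by exact_mod_cast hn ▸ hn2
  have hN3 : 3 ≤ N := by omega
  -- differentiability facts
  have hdf : Differentiable ℝ f := hf.differentiable (by norm_num)
  have hfd1 : ContDiff ℝ 1 (deriv f) := by
    have h11 : ContDiff ℝ (1 + 1 : ℕ) f := by exact_mod_cast hf
    exact (contDiff_succ_iff_deriv.mp h11).2.2
  have hdf' : Differentiable ℝ (deriv f) := hfd1.differentiable (by norm_num)
  have hf2' : ∀ x : ℝ, |x| ≤ R → |deriv (deriv f) x| ≤ D := by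
    intro x hx
    have := hf2 x hx
    rwa [show (2:ℕ) = 1 + 1 from rfl, iteratedDeriv_succ, iteratedDeriv_one] at this
  -- derivative computations
  have hq : ∀ x : ℝ, HasDerivAt (fun y : ℝ => 1 + y ^ 2) (2 * x) x := by
    intro x
    simpa using (hasDerivAt_pow 2 x).const_add 1
  have hP : ∀ x : ℝ, HasDerivAt (fun y : ℝ => (1 + y ^ 2) ^ N)
      ((N : ℝ) * (1 + x ^ 2) ^ (N - 1) * (2 * x)) x := fun x => (hq x).pow N
  have hφ : ∀ x : ℝ, HasDerivAt (fun y => (1 + y ^ 2) ^ N * f y)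
      (((N : ℝ) * (1 + x ^ 2) ^ (N - 1) * (2 * x)) * f x + (1 + x ^ 2) ^ N * deriv f x) x :=
    fun x => (hP x).mul (hdf x).hasDerivAt
  have hderiv1 : deriv (fun y => (1 + y ^ 2) ^ N * f y)
      = fun x => ((N : ℝ) * (1 + x ^ 2) ^ (N - 1) * (2 * x)) * f x + (1 + x ^ 2) ^ N * deriv f x :=
    funext fun x => (hφ x).deriv
  have hc : ∀ x : ℝ, HasDerivAt (fun y : ℝ => (N : ℝ) * (1 + y ^ 2) ^ (N - 1) * (2 * y))
      (((N : ℝ) * (((N - 1 : ℕ) : ℝ) * (1 + x ^ 2) ^ (N - 1 - 1) * (2 * x))) * (2 * x)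
        + ((N : ℝ) * (1 + x ^ 2) ^ (N - 1)) * 2) x := by
    intro x
    have h1 : HasDerivAt (fun y : ℝ => (N : ℝ) * (1 + y ^ 2) ^ (N - 1))
        ((N : ℝ) * (((N - 1 : ℕ) : ℝ) * (1 + x ^ 2) ^ (N - 1 - 1) * (2 * x))) x :=
      ((hq x).pow (N - 1)).const_mul (N : ℝ)
    have h2' : HasDerivAt (fun y : ℝ => 2 * y) 2 x := by
      simpa using (hasDerivAt_id x).const_mul (2:ℝ)
    exact h1.mul h2'
  have hφ'' : ∀ x : ℝ, HasDerivAt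
      (fun x => ((N : ℝ) * (1 + x ^ 2) ^ (N - 1) * (2 * x)) * f x + (1 + x ^ 2) ^ N * deriv f x)
      ((((N : ℝ) * (((N - 1 : ℕ) : ℝ) * (1 + x ^ 2) ^ (N - 1 - 1) * (2 * x))) * (2 * x)
          + ((N : ℝ) * (1 + x ^ 2) ^ (N - 1)) * 2) * f x
        + ((N : ℝ) * (1 + x ^ 2) ^ (N - 1) * (2 * x)) * deriv f x
        + (((N : ℝ) * (1 + x ^ 2) ^ (N - 1) * (2 * x)) * deriv f x
          + (1 + x ^ 2) ^ N * deriv (deriv f) x)) x := by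
    intro x
    exact ((hc x).mul (hdf x).hasDerivAt).add ((hP x).mul (hdf' x).hasDerivAt)
  have hiter : ∀ x : ℝ, iteratedDeriv 2 (fun x => (1 + x ^ 2) ^ N * f x) x
      = (((N : ℝ) * (((N - 1 : ℕ) : ℝ) * (1 + x ^ 2) ^ (N - 1 - 1) * (2 * x))) * (2 * x)
          + ((N : ℝ) * (1 + x ^ 2) ^ (N - 1)) * 2) * f x
        + ((N : ℝ) * (1 + x ^ 2) ^ (N - 1) * (2 * x)) * deriv f x
        + (((N : ℝ) * (1 + x ^ 2) ^ (N - 1) * (2 * x)) * deriv f x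
          + (1 + x ^ 2) ^ N * deriv (deriv f) x) := by
    intro x
    rw [show (2:ℕ) = 1 + 1 from rfl, iteratedDeriv_succ, iteratedDeriv_one, hderiv1]
    exact (hφ'' x).deriv
  -- positivity of the second derivative
  have main : ∀ x ∈ Set.Icc a b, 0 < iteratedDeriv 2 (fun x => (1 + x ^ 2) ^ N * f x) x := by
    intro x hx
    have habs : |x| ≤ R := le_trans (abs_le_max_abs_abs hx.1 hx.2) hR
    have hfx : m ≤ f x := hfm x hx
    have hd1 : |deriv f x| ≤ D := hf1 x habs
    have hd2 : |deriv (deriv f) x| ≤ D := hf2' x habs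
    have keyres : 0 < 2*n*(1+x^2)*m + 4*n*(n-1)*x^2*m - 4*n*|x| * (1+x^2)*D - (1+x^2)^2*D := by
      have := key_ineq m D R |x| n hm hD (abs_nonneg x) habs h2 h3 h4
      simpa [sq_abs] using this
    rw [hiter x]
    have e1 : (1 + x ^ 2) ^ (N - 1) = (1 + x ^ 2) ^ (N - 2) * (1 + x ^ 2) := by
      rw [← pow_succ]; congr 1; omega
    have e2 : (1 + x ^ 2) ^ N = (1 + x ^ 2) ^ (N - 2) * (1 + x ^ 2) ^ 2 := by
      rw [← pow_add]; congr 1; omega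
    have e3 : N - 1 - 1 = N - 2 := by omega
    have ecast : ((N - 1 : ℕ) : ℝ) = n - 1 := by
      push_cast [Nat.cast_sub (show 1 ≤ N by omega)]; ring
    rw [e1, e2, e3, ecast]
    have hQ : 0 < ((n * ((n - 1) * (2 * x)) * (2 * x) + n * (1 + x ^ 2) * 2) * f x
        + 2 * (n * ((1 + x ^ 2) * (2 * x))) * deriv f x
        + (1 + x ^ 2) ^ 2 * deriv (deriv f) x) := by
      have t1 : 0 ≤ 4*n*(n-1)*x^2*(f x - m) :=
        mul_nonneg (mul_nonneg (mul_nonneg (by linarith) (by linarith)) (sq_nonneg x))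
          (by linarith)
      have t2 : 0 ≤ 2*n*(1+x^2)*(f x - m) :=
        mul_nonneg (mul_nonneg (mul_nonneg (by linarith) (by linarith)) (by positivity))
          (by linarith)
      have hxd : -(|x| * D) ≤ x * deriv f x := by
        have habs2 : |x * deriv f x| ≤ |x| * D := by
          rw [abs_mul]; exact mul_le_mul_of_nonneg_left hd1 (abs_nonneg x)
        linarith [(abs_le.mp habs2).1]
      have t3 : 4*n*(1+x^2)*(-(|x| * D)) ≤ 4*n*(1+x^2)*(x * deriv f x) :=
        mul_le_mul_of_nonneg_left hxd (by nlinarith [sq_nonneg x])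
      have t4 : (1+x^2)^2*(-D) ≤ (1+x^2)^2*(deriv (deriv f) x) :=
        mul_le_mul_of_nonneg_left (by linarith [(abs_le.mp hd2).1]) (by positivity)
      linarith [keyres, t1, t2, t3, t4]
    have hA : (0:ℝ) < (1 + x ^ 2) ^ (N - 2) := by positivity
    have heq : ((n * ((n - 1) * (1 + x ^ 2) ^ (N - 2) * (2 * x)) * (2 * x)
          + n * ((1 + x ^ 2) ^ (N - 2) * (1 + x ^ 2)) * 2) * f x
        + n * ((1 + x ^ 2) ^ (N - 2) * (1 + x ^ 2)) * (2 * x) * deriv f x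
        + (n * ((1 + x ^ 2) ^ (N - 2) * (1 + x ^ 2)) * (2 * x) * deriv f x
          + (1 + x ^ 2) ^ (N - 2) * (1 + x ^ 2) ^ 2 * deriv (deriv f) x))
        = (1 + x ^ 2) ^ (N - 2) * ((n * ((n - 1) * (2 * x)) * (2 * x) + n * (1 + x ^ 2) * 2) * f x
        + 2 * (n * ((1 + x ^ 2) * (2 * x))) * deriv f x
        + (1 + x ^ 2) ^ 2 * deriv (deriv f) x) := by ring
    rw [heq]
    exact mul_pos hA hQ
  refine ⟨main, ?_⟩
  have hcont : ContinuousOn (fun x => (1 + x ^ 2) ^ N * f x) (Set.Icc a b) :=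
    (Continuous.mul (by continuity) hdf.continuous).continuousOn
  refine strictConvexOn_of_deriv2_pos (convex_Icc a b) hcont ?_
  intro x hx
  rw [interior_Icc] at hx
  have := main x (Set.Ioo_subset_Icc_self hx)
  rwa [← iteratedDeriv_eq_iterate]
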